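/- Let γ = 1, s ≠ 0, μ, k > 0, A ≠ 0, B ∈ ℝ, and suppose f(P) = P − (As + B) + A²/P has two positive roots P⁺ < P⁻. Define F₁'(P) = f(P) − 2(sμ/k)²P for P > 0. Then F₁''(P) = f'(P) − 2(sμ/k)² < 0 for all 0 < P < P⁺, lim_{P→0⁺} F₁'(P) = +∞, F₁'(P⁺) = −2(sμ/k)²P⁺ < 0, and consequently F₁' has exactly one zero in the interval (0, P⁺). -/

import Mathlib

/-- for the isothermal case `γ = 1`, with `f(P) = P − (As+B) + A²/P` having two
positive roots `P⁺ < P⁻`, the function `F₁'(P) = f(P) − 2(sμ/k)²P` satisfies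
`F₁''(P) = f'(P) − 2(sμ/k)² < 0` on `(0, P⁺)`, tends to `+∞` as `P → 0⁺`, is negative at
`P⁺` (where it equals `−2(sμ/k)²P⁺`), and has exactly one zero in `(0, P⁺)`. -/
theorem stmt_12 (s μ k A B Pp Pm : ℝ) (hs : s ≠ 0) (hμ : 0 < μ) (hk : 0 < k) (hA : A ≠ 0)
    (hPp : 0 < Pp) (hPpPm : Pp < Pm)
    (f : ℝ → ℝ) (hf : ∀ P : ℝ, f P = P - (A * s + B) + A ^ 2 / P)
    (hroot1 : f Pp = 0) (hroot2 : f Pm = 0)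
    (G : ℝ → ℝ) (hG : ∀ P : ℝ, G P = f P - 2 * (s * μ / k) ^ 2 * P) :
    (∀ P : ℝ, 0 < P → P < Pp →
      deriv G P = deriv f P - 2 * (s * μ / k) ^ 2 ∧ deriv G P < 0) ∧
    Filter.Tendsto G (nhdsWithin 0 (Set.Ioi 0)) Filter.atTop ∧
    G Pp = -2 * (s * μ / k) ^ 2 * Pp ∧ G Pp < 0 ∧
    (∃! P : ℝ, P ∈ Set.Ioo 0 Pp ∧ G P = 0) := by
  set c : ℝ := 2 * (s * μ / k) ^ 2 with hc_def
  have hc : 0 < c := by positivity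
  have hPm : 0 < Pm := hPp.trans hPpPm
  -- quadratic relations
  have e1 : Pp * Pp - (A * s + B) * Pp + A ^ 2 = 0 := by
    have h := hroot1; rw [hf] at h
    field_simp at h; linarith
  have e2 : Pm * Pm - (A * s + B) * Pm + A ^ 2 = 0 := by
    have h := hroot2; rw [hf] at h
    field_simp at h; linarith
  have hsum : Pp + Pm = A * s + B := by
    have key : (Pp - Pm) * (Pp + Pm - (A * s + B)) = 0 := by ring_nf; nlinarith [e1, e2]
    rcases mul_eq_zero.mp key with h | h
    · exact absurd h (sub_ne_zero.mpr hPpPm.ne)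
    · linarith
  have hA2 : A ^ 2 = Pp * Pm := by nlinarith [e1, hsum]
  -- rewrite G and f
  have hGeq : G = fun P => (1 - c) * P - (A * s + B) + A ^ 2 * P⁻¹ := by
    funext P; rw [hG, hf, div_eq_mul_inv]; ring
  have hfeq : f = fun P => P - (A * s + B) + A ^ 2 * P⁻¹ := by
    funext P; rw [hf, div_eq_mul_inv]
  have hfD : ∀ P : ℝ, P ≠ 0 → HasDerivAt f (1 - A ^ 2 / P ^ 2) P := by
    intro P hP
    rw [hfeq]
    have h := (((hasDerivAt_id P).sub_const (A * s + B)).add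
      ((hasDerivAt_inv hP).const_mul (A ^ 2)))
    refine h.congr_deriv ?_
    ring
  have hGD : ∀ P : ℝ, P ≠ 0 → HasDerivAt G (1 - A ^ 2 / P ^ 2 - c) P := by
    intro P hP
    rw [hGeq]
    have h := ((((hasDerivAt_id P).const_mul (1 - c)).sub_const (A * s + B)).add
      ((hasDerivAt_inv hP).const_mul (A ^ 2)))
    refine h.congr_deriv ?_
    ring
  have hGderivneg : ∀ P : ℝ, 0 < P → P < Pp → deriv G P < 0 := by
    intro P hP0 hPPp
    rw [(hGD P hP0.ne').deriv]
    have hlt : P ^ 2 < A ^ 2 := by rw [hA2]; nlinarith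
    have h1 : (1 : ℝ) < A ^ 2 / P ^ 2 := (one_lt_div (by positivity)).2 hlt
    linarith
  have htend : Filter.Tendsto G (nhdsWithin 0 (Set.Ioi 0)) Filter.atTop := by
    rw [hGeq]
    have h1 : Filter.Tendsto (fun P : ℝ => A ^ 2 * P⁻¹) (nhdsWithin 0 (Set.Ioi 0))
        Filter.atTop :=
      Filter.Tendsto.const_mul_atTop (by positivity) tendsto_inv_nhdsGT_zero
    have h2 : Filter.Tendsto (fun P : ℝ => (1 - c) * P - (A * s + B))
        (nhdsWithin 0 (Set.Ioi 0)) (nhds (-(A * s + B))) := by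
      have h3 : Filter.Tendsto (fun P : ℝ => (1 - c) * P - (A * s + B)) (nhds 0)
          (nhds ((1 - c) * 0 - (A * s + B))) :=
        ((continuous_const.mul continuous_id).sub continuous_const).tendsto 0
      simpa using h3.mono_left nhdsWithin_le_nhds
    exact h2.add_atTop h1
  have hGPpneg : G Pp < 0 := by
    rw [hG, hroot1]
    have := mul_pos hc hPp
    simpa using by linarith
  refine ⟨?_, htend, ?_, hGPpneg, ?_⟩
  · intro P hP0 hPPp
    refine ⟨?_, hGderivneg P hP0 hPPp⟩
    rw [(hGD P hP0.ne').deriv, (hfD P hP0.ne').deriv]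
  · rw [hG, hroot1]; ring
  · -- unique zero
    have hanti : StrictAntiOn G (Set.Ioo 0 Pp) := by
      apply strictAntiOn_of_deriv_neg (convex_Ioo 0 Pp)
      · exact fun x hx =>
          ((hGD x (ne_of_gt hx.1)).differentiableAt).continuousAt.continuousWithinAt
      · intro x hx
        rw [interior_Ioo] at hx
        exact hGderivneg x hx.1 hx.2
    have hmem : Set.Ioo (0:ℝ) Pp ∈ nhdsWithin 0 (Set.Ioi 0) :=
      Ioo_mem_nhdsGT_of_mem ⟨le_refl 0, hPp⟩
    have hev : ∀ᶠ P in nhdsWithin 0 (Set.Ioi 0), P ∈ Set.Ioo (0:ℝ) Pp := hmem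
    obtain ⟨a, hGa, haIoo⟩ := ((htend.eventually_gt_atTop 0).and hev).exists
    have hcont : ContinuousOn G (Set.Icc a Pp) := fun x hx =>
      ((hGD x (ne_of_gt (lt_of_lt_of_le haIoo.1 hx.1))).differentiableAt).continuousAt.continuousWithinAt
    have himg := intermediate_value_Ioo' haIoo.2.le hcont
    obtain ⟨z, hzmem, hGz⟩ := himg ⟨hGPpneg, hGa⟩
    have hzIoo : z ∈ Set.Ioo (0:ℝ) Pp := ⟨haIoo.1.trans hzmem.1, hzmem.2⟩
    refine ⟨z, ⟨hzIoo, hGz⟩, ?_⟩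
    rintro y ⟨hy, hGy⟩
    exact hanti.injOn hy hzIoo (hGy.trans hGz.symm)
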